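/- Let n and k be positive integers with n ≤ k ≤ C(n,2) + n. Then: g(n,k) = k − n + t if C(n−t,2) + t(n−t−1) + n ≤ k ≤ C(n−t,2) + t(n−t) + n − 2 for some t with 2 ≤ t ≤ n − 1; g(n,k) = k − n + t − 1 if k = C(n−t,2) + t(n−t) + n − 1 for some t with 2 ≤ t ≤ n − 1; g(n,k) = C(n,2) − 1 if k = C(n,2) + n − 1; and g(n,k) = C(n,2) if k = C(n,2) + n. -/

import Mathlib

open SimpleGraph

/-- A walk in a total-colored graph is *total monochromatic* if all of its edges and
internal vertices have the same color. -/
def IsTotalMonoWalk {V : Type*} {G : SimpleGraph V} (ce : Sym2 V → ℕ) (cv : V → ℕ)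
    {u v : V} (w : G.Walk u v) : Prop :=
  ∃ c, (∀ e ∈ w.edges, ce e = c) ∧ ∀ x ∈ w.support.tail.dropLast, cv x = c

/-- A total coloring (edge coloring `ce`, vertex coloring `cv`) of `G` is a
*TMC-coloring* if any two vertices are connected by a total monochromatic path. -/
def IsTMCColoring {V : Type*} (G : SimpleGraph V) (ce : Sym2 V → ℕ) (cv : V → ℕ) : Prop :=
  ∀ u v : V, u ≠ v → ∃ w : G.Walk u v, w.IsPath ∧ IsTotalMonoWalk ce cv w

/-- The number of colors used by a total coloring of `G`:
colors appearing on edges of `G` together with colors appearing on vertices. -/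
noncomputable def colorsUsed {V : Type*} (G : SimpleGraph V) (ce : Sym2 V → ℕ) (cv : V → ℕ) : ℕ :=
  (ce '' G.edgeSet ∪ Set.range cv).ncard

/-- The total monochromatic connection number `tmc G`: the maximum number of colors
used in a TMC-coloring of `G`. -/
noncomputable def tmc {V : Type*} [Fintype V] (G : SimpleGraph V) : ℕ :=
  sSup {k | ∃ ce cv, IsTMCColoring G ce cv ∧ colorsUsed G ce cv = k}

/-- `gfun n k` is the maximum integer `g` (at most the number of edges of a complete
graph on `n` vertices) such that every connected graph of order `n` with at most `g`
edges has total monochromatic connection number at most `k`. -/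
noncomputable def gfun (n k : ℕ) : ℕ :=
  sSup {g : ℕ | g ≤ n.choose 2 ∧
    ∀ (V : Type) [Fintype V] (G : SimpleGraph V), G.Connected →
      Fintype.card V = n → G.edgeSet.ncard ≤ g → tmc G ≤ k}


open SimpleGraph Finset

section TMCProof


/-! ### Arithmetic lemmas -/

lemma choose2_succ (a : ℕ) : (a+1).choose 2 = a.choose 2 + a := by
  rw [Nat.choose_succ_succ]
  simp [Nat.choose_one_right, Nat.add_comm]

lemma choose2_add (a b : ℕ) : (a+b).choose 2 = a.choose 2 + b.choose 2 + a*b := by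
  induction a with
  | zero => simp
  | succ a ih =>
    have h : a + 1 + b = (a + b) + 1 := by omega
    rw [h, choose2_succ, ih, choose2_succ]
    ring

lemma sum_choose2_le {α : Type*} (s : Finset α) (f : α → ℕ) :
    ∑ i ∈ s, (f i).choose 2 ≤ (∑ i ∈ s, f i).choose 2 := by
  classical
  induction s using Finset.cons_induction with
  | empty => simp
  | cons a s ha ih =>
    rw [Finset.sum_cons, Finset.sum_cons, choose2_add]
    omega

lemma nat_sSup_le {s : Set ℕ} {b : ℕ} (h : ∀ x ∈ s, x ≤ b) : sSup s ≤ b := by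
  rcases s.eq_empty_or_nonempty with rfl | hne
  · simp [csSup_empty]
  · exact csSup_le hne h

/-! ### Pair counting -/

variable {V : Type} [Fintype V] [DecidableEq V]

lemma pairs_card_le {T : Finset V} {s : Finset (Sym2 V)}
    (hs : ∀ z ∈ s, ¬z.IsDiag ∧ ∀ x ∈ z, x ∈ T) : s.card ≤ T.card.choose 2 := by
  rw [← Sym2.card_image_offDiag T]
  apply Finset.card_le_card
  intro z hz
  obtain ⟨hd, hmem⟩ := hs z hz
  revert hd hmem
  induction z using Sym2.ind with
  | _ a b =>
    intro hd hmem
    simp only [Finset.mem_image, Finset.mem_offDiag]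
    refine ⟨(a, b), ⟨hmem a (by simp), hmem b (by simp), ?_⟩, rfl⟩
    intro hab
    exact hd (by simp [Sym2.mk_isDiag_iff]; exact hab)

lemma pairs_card_le_univ {s : Finset (Sym2 V)}
    (hs : ∀ z ∈ s, ¬z.IsDiag) : s.card ≤ (Fintype.card V).choose 2 := by
  have h := pairs_card_le (T := Finset.univ) (s := s) (fun z hz => ⟨hs z hz, fun x _ => mem_univ x⟩)
  simpa using h

lemma edgeFinset_card_le (G : SimpleGraph V) [DecidableRel G.Adj] :
    G.edgeFinset.card ≤ (Fintype.card V).choose 2 :=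
  pairs_card_le_univ (fun z hz => G.not_isDiag_of_mem_edgeSet (mem_edgeFinset.mp hz))

/-! ### Components: vertex count ≤ edge count + 1 -/

noncomputable instance (H : SimpleGraph V) : Fintype H.ConnectedComponent := Fintype.ofFinite _

lemma edge_mem_reach (H : SimpleGraph V) {e : Sym2 V} (he : e ∈ H.edgeSet) {x y : V}
    (hx : x ∈ e) (hy : y ∈ e) : H.Reachable x y := by
  revert he hx hy
  induction e using Sym2.ind with
  | _ a b =>
    intro he hx hy
    rw [Sym2.mem_iff] at hx hy
    rw [mem_edgeSet] at he
    rcases hx with rfl | rfl <;> rcases hy with rfl | rfl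
    exacts [Reachable.refl _, he.reachable, he.symm.reachable, Reachable.refl _]

lemma comp_card_le (H : SimpleGraph V) [DecidableRel H.Adj] (K : H.ConnectedComponent)
    (A : Finset V) (B : Finset (Sym2 V))
    (hA : ∀ v, v ∈ A ↔ H.connectedComponentMk v = K)
    (hB : ∀ e, e ∈ H.edgeFinset → H.connectedComponentMk e.out.1 = K → e ∈ B) :
    A.card ≤ B.card + 1 := by
  classical
  set x₀ := K.out with hx₀def
  have hx₀K : H.connectedComponentMk x₀ = K := K.out_eq
  have hex : ∀ y ∈ A.erase x₀, ∃ b, H.Adj y b ∧ H.dist b x₀ < H.dist y x₀ := by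
    intro y hy
    have hyA := Finset.mem_of_mem_erase hy
    have hne : y ≠ x₀ := Finset.ne_of_mem_erase hy
    have hr : H.Reachable y x₀ := ConnectedComponent.exact (by rw [(hA y).mp hyA, hx₀K])
    obtain ⟨w, hw⟩ := hr.exists_walk_length_eq_dist
    cases w with
    | nil => exact absurd rfl hne
    | cons h' w' =>
      refine ⟨_, h', ?_⟩
      have hd := SimpleGraph.dist_le w'
      simp [Walk.length_cons] at hw
      omega
  choose! f hf1 hf2 using hex
  have hinj : ∀ y ∈ A.erase x₀, ∀ y' ∈ A.erase x₀, s(y, f y) = s(y', f y') → y = y' := by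
    intro y hy y' hy' heq
    rcases Sym2.eq_iff.mp heq with ⟨h1, _⟩ | ⟨h1, h2⟩
    · exact h1
    · exfalso
      have d1 := hf2 y hy
      have d2 := hf2 y' hy'
      rw [h2] at d1
      rw [← h1] at d2
      omega
  have hmem : ∀ y ∈ A.erase x₀, s(y, f y) ∈ B := by
    intro y hy
    have hyA := Finset.mem_of_mem_erase hy
    have hadj := hf1 y hy
    have hedge : s(y, f y) ∈ H.edgeFinset := by rw [mem_edgeFinset, mem_edgeSet]; exact hadj
    apply hB _ hedge
    have hout : (s(y, f y)).out.1 ∈ s(y, f y) := Sym2.out_fst_mem _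
    have hreach : H.Reachable (s(y, f y)).out.1 y :=
      edge_mem_reach H (mem_edgeFinset.mp hedge) hout (by simp)
    rw [ConnectedComponent.sound hreach]
    exact (hA y).mp hyA
  have hcard : (A.erase x₀).card ≤ B.card := Finset.card_le_card_of_injOn _ hmem hinj
  have : A.card ≤ (A.erase x₀).card + 1 := by
    rcases em (x₀ ∈ A) with h | h
    · rw [Finset.card_erase_of_mem h]; omega
    · rw [Finset.erase_eq_of_notMem h]; omega
  omega

lemma W1 (G H : SimpleGraph V) [DecidableRel G.Adj] [DecidableRel H.Adj] (hle : H ≤ G)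
    (s : Finset (Sym2 V))
    (hs : ∀ z ∈ s, ¬z.IsDiag ∧ z ∉ G.edgeSet ∧ ∀ x ∈ z, ∀ y ∈ z, H.Reachable x y) :
    s.card ≤ H.edgeFinset.card.choose 2 := by
  classical
  set comp : Sym2 V → H.ConnectedComponent := fun z => H.connectedComponentMk z.out.1 with hcomp
  have hcard : s.card = ∑ K ∈ univ, (s.filter fun z => comp z = K).card :=
    card_eq_sum_card_fiberwise (fun x _ => mem_univ _)
  have hecard : H.edgeFinset.card = ∑ K ∈ univ, (H.edgeFinset.filter fun e => comp e = K).card :=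
    card_eq_sum_card_fiberwise (fun x _ => mem_univ _)
  have hK : ∀ K : H.ConnectedComponent,
      (s.filter fun z => comp z = K).card ≤
        ((H.edgeFinset.filter fun e => comp e = K).card).choose 2 := by
    intro K
    set A := (univ.filter fun v => H.connectedComponentMk v = K) with hAdef
    set B := H.edgeFinset.filter fun e => comp e = K with hBdef
    set sK := s.filter fun z => comp z = K with hsKdef
    have hBmem : ∀ e ∈ B, ¬e.IsDiag ∧ ∀ x ∈ e, x ∈ A := by
      intro e he
      rw [hBdef, Finset.mem_filter] at he
      obtain ⟨heE, heK⟩ := he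
      refine ⟨G.not_isDiag_of_mem_edgeSet ((edgeSet_mono hle) (mem_edgeFinset.mp heE)), fun x hx => ?_⟩
      rw [hAdef, Finset.mem_filter]
      refine ⟨mem_univ _, ?_⟩
      have := edge_mem_reach H (mem_edgeFinset.mp heE) hx (Sym2.out_fst_mem e)
      rw [ConnectedComponent.sound this]
      exact heK
    have hsKmem : ∀ z ∈ sK, ¬z.IsDiag ∧ ∀ x ∈ z, x ∈ A := by
      intro z hz
      rw [hsKdef, Finset.mem_filter] at hz
      obtain ⟨hzs, hzK⟩ := hz
      obtain ⟨hd, _, hr⟩ := hs z hzs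
      refine ⟨hd, fun x hx => ?_⟩
      rw [hAdef, Finset.mem_filter]
      refine ⟨mem_univ _, ?_⟩
      rw [ConnectedComponent.sound (hr x hx z.out.1 (Sym2.out_fst_mem z))]
      exact hzK
    have hdisj : Disjoint sK B := by
      rw [Finset.disjoint_left]
      intro z hz hzB
      obtain ⟨hzs, _⟩ := Finset.mem_filter.mp hz
      obtain ⟨hzE, _⟩ := Finset.mem_filter.mp hzB
      exact (hs z hzs).2.1 ((edgeSet_mono hle) (mem_edgeFinset.mp hzE))
    have hunion : sK.card + B.card ≤ A.card.choose 2 := by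
      rw [← card_union_of_disjoint hdisj]
      apply pairs_card_le
      intro z hz
      rcases Finset.mem_union.mp hz with h | h
      · exact hsKmem z h
      · exact hBmem z h
    have hAB : A.card ≤ B.card + 1 := by
      apply comp_card_le H K A B
      · intro v; rw [hAdef]; simp
      · intro e he hk; rw [hBdef, Finset.mem_filter]; exact ⟨he, hk⟩
    have hch : A.card.choose 2 ≤ (B.card + 1).choose 2 := Nat.choose_le_choose 2 hAB
    rw [choose2_succ] at hch
    omega
  rw [hcard, hecard]
  calc ∑ K ∈ univ, (s.filter fun z => comp z = K).card
      ≤ ∑ K ∈ univ, ((H.edgeFinset.filter fun e => comp e = K).card).choose 2 :=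
        Finset.sum_le_sum (fun K _ => hK K)
    _ ≤ (∑ K ∈ univ, (H.edgeFinset.filter fun e => comp e = K).card).choose 2 :=
        sum_choose2_le _ _
/-! ### colorsUsed basics -/

lemma colorsUsed_eq (G : SimpleGraph V) [DecidableRel G.Adj] (ce : Sym2 V → ℕ) (cv : V → ℕ) :
    colorsUsed G ce cv = (G.edgeFinset.image ce ∪ Finset.univ.image cv).card := by
  unfold colorsUsed
  rw [← Set.ncard_coe_finset]
  congr 1
  rw [Finset.coe_union, Finset.coe_image, Finset.coe_image, coe_edgeFinset, Finset.coe_univ,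
    Set.image_univ]

lemma colorsUsed_le (G : SimpleGraph V) [DecidableRel G.Adj] (ce : Sym2 V → ℕ) (cv : V → ℕ) :
    colorsUsed G ce cv ≤ G.edgeFinset.card + Fintype.card V := by
  rw [colorsUsed_eq]
  calc (G.edgeFinset.image ce ∪ Finset.univ.image cv).card
      ≤ (G.edgeFinset.image ce).card + (Finset.univ.image cv).card := card_union_le _ _
    _ ≤ G.edgeFinset.card + Fintype.card V := by
        have h1 := Finset.card_image_le (s := G.edgeFinset) (f := ce)
        have h2 := Finset.card_image_le (s := (Finset.univ : Finset V)) (f := cv)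
        simp only [Finset.card_univ] at h2
        omega

lemma tmc_le_of (G : SimpleGraph V) (b : ℕ)
    (h : ∀ ce cv, IsTMCColoring G ce cv → colorsUsed G ce cv ≤ b) : tmc G ≤ b := by
  apply nat_sSup_le
  rintro x ⟨ce, cv, hc, rfl⟩
  exact h ce cv hc

lemma le_tmc (G : SimpleGraph V) (ce : Sym2 V → ℕ) (cv : V → ℕ) (h : IsTMCColoring G ce cv) :
    colorsUsed G ce cv ≤ tmc G := by
  classical
  apply le_csSup
  · refine ⟨G.edgeFinset.card + Fintype.card V, ?_⟩
    rintro x ⟨ce', cv', _, rfl⟩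
    exact colorsUsed_le G ce' cv'
  · exact ⟨ce, cv, h, rfl⟩

lemma tmc_le_triv (G : SimpleGraph V) [DecidableRel G.Adj] :
    tmc G ≤ G.edgeFinset.card + Fintype.card V :=
  tmc_le_of G _ (fun ce cv _ => colorsUsed_le G ce cv)

/-! ### The key counting lemma -/

lemma mem_ndp (z : Sym2 V) : z ∈ (univ : Finset V).offDiag.image Sym2.mk.uncurry ↔ ¬z.IsDiag := by
  constructor
  · rintro hz
    obtain ⟨⟨a, b⟩, hab, rfl⟩ := Finset.mem_image.mp hz
    simp only [Finset.mem_offDiag] at hab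
    simp [Sym2.mk_isDiag_iff]
    exact hab.2.2
  · intro hz
    refine Finset.mem_image.mpr ⟨z.out, ?_, z.out_eq⟩
    simp only [Finset.mem_offDiag]
    refine ⟨mem_univ _, mem_univ _, ?_⟩
    intro h
    exact hz (by rw [← z.out_eq, Sym2.isDiag_iff_proj_eq]; exact h)

lemma ndp_card : ((univ : Finset V).offDiag.image Sym2.mk.uncurry).card = (Fintype.card V).choose 2 := by
  rw [Sym2.card_image_offDiag, Finset.card_univ]


noncomputable def Hc (G : SimpleGraph V) [DecidableRel G.Adj] (ce : Sym2 V → ℕ) (c : ℕ) :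
    SimpleGraph V :=
  SimpleGraph.fromEdgeSet ↑(G.edgeFinset.filter fun e => ce e = c)

lemma Hc_le (G : SimpleGraph V) [DecidableRel G.Adj] (ce : Sym2 V → ℕ) (c : ℕ) :
    Hc G ce c ≤ G := by
  intro a b hab
  rw [Hc, fromEdgeSet_adj] at hab
  obtain ⟨h1, _⟩ := hab
  rw [Finset.mem_coe, Finset.mem_filter, mem_edgeFinset, mem_edgeSet] at h1
  exact h1.1

lemma Hc_edgeFinset (G : SimpleGraph V) [DecidableRel G.Adj] (ce : Sym2 V → ℕ) (c : ℕ)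
    [DecidableRel (Hc G ce c).Adj] :
    (Hc G ce c).edgeFinset = G.edgeFinset.filter fun e => ce e = c := by
  ext e
  rw [mem_edgeFinset, Hc, edgeSet_fromEdgeSet, Set.mem_diff]
  constructor
  · rintro ⟨h1, _⟩
    exact Finset.mem_coe.mp h1
  · intro h
    refine ⟨Finset.mem_coe.mpr h, ?_⟩
    simp only [Sym2.mem_diagSet]
    exact G.not_isDiag_of_mem_edgeSet (mem_edgeFinset.mp (Finset.mem_filter.mp h).1)

lemma KEY (G : SimpleGraph V) [DecidableRel G.Adj] (ce : Sym2 V → ℕ) (cv : V → ℕ)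
    (hT : IsTMCColoring G ce cv) :
    ∃ w, colorsUsed G ce cv + w = G.edgeFinset.card + Fintype.card V ∧
      (Fintype.card V).choose 2 ≤ G.edgeFinset.card + w.choose 2 := by
  classical
  set K := G.edgeFinset.image ce ∪ Finset.univ.image cv with hK
  set ec : ℕ → ℕ := fun c => (G.edgeFinset.filter fun e => ce e = c).card with hec
  set nc : ℕ → ℕ := fun c => ((univ : Finset V).filter fun v => cv v = c).card with hnc
  have hmsum : G.edgeFinset.card = ∑ c ∈ K, ec c :=
    card_eq_sum_card_fiberwise (fun e he => Finset.mem_union_left _ (Finset.mem_image_of_mem _ he))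
  have hnsum : Fintype.card V = ∑ c ∈ K, nc c := by
    rw [← Finset.card_univ]
    exact card_eq_sum_card_fiberwise
      (fun v _ => Finset.mem_union_right _ (Finset.mem_image_of_mem _ (mem_univ v)))
  have hpos : ∀ c ∈ K, 1 ≤ ec c + nc c := by
    intro c hc
    rcases Finset.mem_union.mp hc with h | h
    · obtain ⟨e, he, rfl⟩ := Finset.mem_image.mp h
      have : e ∈ G.edgeFinset.filter fun e' => ce e' = ce e := Finset.mem_filter.mpr ⟨he, rfl⟩
      have := Finset.card_pos.mpr ⟨e, this⟩
      simp only [hec]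
      omega
    · obtain ⟨v, _, rfl⟩ := Finset.mem_image.mp h
      have : v ∈ (univ : Finset V).filter fun v' => cv v' = cv v :=
        Finset.mem_filter.mpr ⟨mem_univ _, rfl⟩
      have := Finset.card_pos.mpr ⟨v, this⟩
      simp only [hnc]
      omega
  set w := ∑ c ∈ K, (ec c + nc c - 1) with hw
  have hKcard : K.card + w = G.edgeFinset.card + Fintype.card V := by
    have : ∑ c ∈ K, ((ec c + nc c - 1) + 1) = ∑ c ∈ K, (ec c + nc c) :=
      Finset.sum_congr rfl (fun c hc => by have := hpos c hc; omega)
    rw [Finset.sum_add_distrib, Finset.sum_const, smul_eq_mul, mul_one] at this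
    rw [hmsum, hnsum, ← Finset.sum_add_distrib, ← this, hw]
    omega
  -- the set of nonadjacent pairs
  set NA := ((univ : Finset V).offDiag.image Sym2.mk.uncurry) \ G.edgeFinset with hNA
  have hNAcard : NA.card + G.edgeFinset.card = (Fintype.card V).choose 2 := by
    have hsub : G.edgeFinset ⊆ (univ : Finset V).offDiag.image Sym2.mk.uncurry :=
      fun e he => (mem_ndp e).mpr (G.not_isDiag_of_mem_edgeSet (mem_edgeFinset.mp he))
    rw [hNA, Finset.card_sdiff_of_subset hsub]
    have hle := Finset.card_le_card (s := G.edgeFinset)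
      (t := (univ : Finset V).offDiag.image Sym2.mk.uncurry)
      (fun e he => (mem_ndp e).mpr (G.not_isDiag_of_mem_edgeSet (mem_edgeFinset.mp he)))
    rw [ndp_card] at hle ⊢
    omega
  -- each nonadjacent pair is served by some color
  have hserve : ∀ z ∈ NA, ∃ c, c ∈ K ∧ 1 ≤ nc c ∧
      (∀ x ∈ z, ∀ y ∈ z, (Hc G ce c).Reachable x y) := by
    intro z hz
    rw [hNA, Finset.mem_sdiff] at hz
    obtain ⟨hz1, hz2⟩ := hz
    have hnd : ¬z.IsDiag := (mem_ndp z).mp hz1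
    obtain ⟨⟨u, v⟩, hzuv⟩ : ∃ p : V × V, Sym2.mk p.1 p.2 = z := ⟨z.out, z.out_eq⟩
    have hne : u ≠ v := by
      intro h
      exact hnd (by rw [← hzuv, Sym2.mk_isDiag_iff]; exact h)
    have hnadj : ¬G.Adj u v := by
      intro h
      exact hz2 (by rw [← hzuv] at *; exact mem_edgeFinset.mpr (G.mem_edgeSet.mpr h))
    obtain ⟨wk, hwkpath, c, hcedges, hcverts⟩ := hT u v hne
    -- walk has length ≥ 2, extract first edge and internal vertex
    cases wk with
    | nil => exact absurd rfl hne
    | cons h1 wk2 =>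
      cases wk2 with
      | nil => exact absurd h1 hnadj
      | cons h2 wk3 =>
        rename_i x1 x2
        -- first edge
        have hfe : s(u, x1) ∈ (Walk.cons h1 (Walk.cons h2 wk3)).edges := by
          simp [Walk.edges_cons]
        have hc1 : ce s(u, x1) = c := hcedges _ hfe
        have hcK : c ∈ K := by
          rw [← hc1]
          exact Finset.mem_union_left _
            (Finset.mem_image_of_mem _ (mem_edgeFinset.mpr (G.mem_edgeSet.mpr h1)))
        -- internal vertex x1
        have hx1 : x1 ∈ (Walk.cons h1 (Walk.cons h2 wk3)).support.tail.dropLast := by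
          rw [Walk.support_cons, List.tail_cons, Walk.support_cons]
          rw [wk3.support_eq_cons]
          rw [List.dropLast_cons₂]; simp
        have hcv1 : cv x1 = c := hcverts _ hx1
        have hnc1 : 1 ≤ nc c := by
          have : x1 ∈ (univ : Finset V).filter fun v' => cv v' = c :=
            Finset.mem_filter.mpr ⟨mem_univ _, hcv1⟩
          have := Finset.card_pos.mpr ⟨x1, this⟩
          simp only [hnc]
          omega
        -- reachability
        have hreach : (Hc G ce c).Reachable u v := by
          have hsub : ∀ e ∈ (Walk.cons h1 (Walk.cons h2 wk3)).edges, e ∈ (Hc G ce c).edgeSet := by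
            intro e he
            rw [Hc, edgeSet_fromEdgeSet, Set.mem_diff]
            constructor
            · rw [Finset.mem_coe, Finset.mem_filter, mem_edgeFinset]
              exact ⟨Walk.edges_subset_edgeSet _ he, hcedges e he⟩
            · simp only [Sym2.mem_diagSet]
              exact G.not_isDiag_of_mem_edgeSet (Walk.edges_subset_edgeSet _ he)
          exact ((Walk.cons h1 (Walk.cons h2 wk3)).transfer _ hsub).reachable
        refine ⟨c, hcK, hnc1, ?_⟩
        intro x hx y hy
        rw [← hzuv, Sym2.mem_iff] at hx hy
        rcases hx with rfl | rfl <;> rcases hy with rfl | rfl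
        exacts [Reachable.refl _, hreach, hreach.symm, Reachable.refl _]
  choose! F hF using hserve
  have hNAsum : NA.card = ∑ c ∈ K, (NA.filter fun z => F z = c).card :=
    card_eq_sum_card_fiberwise (fun z hz => (hF z hz).1)
  have hfiber : ∀ c ∈ K, (NA.filter fun z => F z = c).card ≤ (ec c + nc c - 1).choose 2 := by
    intro c hc
    rcases Finset.eq_empty_or_nonempty (NA.filter fun z => F z = c) with h | h
    · simp [h]
    · obtain ⟨z₀, hz₀⟩ := h
      obtain ⟨hz₀NA, hz₀F⟩ := Finset.mem_filter.mp hz₀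
      have hnc1 : 1 ≤ nc c := by
        have := (hF z₀ hz₀NA).2.1
        rwa [hz₀F] at this
      have hW1 : (NA.filter fun z => F z = c).card ≤ ((Hc G ce c).edgeFinset.card).choose 2 := by
        apply W1 G (Hc G ce c) (Hc_le G ce c)
        intro z hz
        obtain ⟨hzNA, hzF⟩ := Finset.mem_filter.mp hz
        rw [hNA, Finset.mem_sdiff] at hzNA
        refine ⟨(mem_ndp z).mp hzNA.1, ?_, ?_⟩
        · intro h
          exact hzNA.2 (mem_edgeFinset.mpr h)
        · have := (hF z (by rw [hNA, Finset.mem_sdiff]; exact hzNA)).2.2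
          rwa [hzF] at this
      rw [Hc_edgeFinset] at hW1
      calc (NA.filter fun z => F z = c).card ≤ (ec c).choose 2 := hW1
        _ ≤ (ec c + nc c - 1).choose 2 := Nat.choose_le_choose 2 (by omega)
  refine ⟨w, ?_, ?_⟩
  · rw [← hKcard, colorsUsed_eq, hK]
  · calc (Fintype.card V).choose 2 = NA.card + G.edgeFinset.card := hNAcard.symm
      _ ≤ (∑ c ∈ K, (ec c + nc c - 1).choose 2) + G.edgeFinset.card := by
          rw [hNAsum]
          exact Nat.add_le_add_right (Finset.sum_le_sum hfiber) _
      _ ≤ w.choose 2 + G.edgeFinset.card := by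
          rw [hw]
          exact Nat.add_le_add_right (sum_choose2_le _ _) _
      _ = G.edgeFinset.card + w.choose 2 := by omega

lemma tmc_ub (G : SimpleGraph V) [DecidableRel G.Adj] (t : ℕ)
    (h : (t - 1).choose 2 + G.edgeFinset.card < (Fintype.card V).choose 2) :
    tmc G + t ≤ G.edgeFinset.card + Fintype.card V := by
  have hb : tmc G ≤ G.edgeFinset.card + Fintype.card V - t := by
    apply tmc_le_of
    intro ce cv hT
    obtain ⟨w, hw1, hw2⟩ := KEY G ce cv hT
    rcases le_or_gt t w with hcase | hcase
    · omega
    · exfalso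
      have := Nat.choose_le_choose 2 (show w ≤ t - 1 by omega)
      omega
  -- also need t ≤ m + n from the hypothesis: C(t-1,2) < C(n,2) doesn't give... derive separately
  have ht : t ≤ G.edgeFinset.card + Fintype.card V := by
    by_contra hcon
    push_neg at hcon
    -- t > m + n; then t - 1 ≥ m + n ≥ ... need C(t-1,2) ≥ C(n,2) - m... 
    -- n ≤ m + n ≤ t - 1 so C(n,2) ≤ C(t-1,2), contradiction with h
    have hn : Fintype.card V ≤ t - 1 := by omega
    have := Nat.choose_le_choose 2 hn
    omega
  omega
lemma CON (G : SimpleGraph V) [DecidableRel G.Adj] (z : V) (L : Finset V)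
    (hzL : z ∉ L) (hadj : ∀ i ∈ L, G.Adj z i)
    (hserve : ∀ u v : V, u ≠ v → ¬G.Adj u v → u ∈ L ∧ v ∈ L) :
    G.edgeFinset.card + Fintype.card V ≤ tmc G + L.card := by
  classical
  set M := Fintype.card (Sym2 V) with hM
  set eenc := Fintype.equivFin (Sym2 V) with heenc
  set venc := Fintype.equivFin V with hvenc
  set starE : Finset (Sym2 V) := L.image (fun i => s(z, i)) with hstarE
  set ce : Sym2 V → ℕ := fun e => if e ∈ starE then 0 else (eenc e).val + 1 with hce
  set cv : V → ℕ := fun x => if x = z then 0 else (venc x).val + 1 + M with hcv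
  -- star edges are edges of G
  have hstar_sub : starE ⊆ G.edgeFinset := by
    intro e he
    obtain ⟨i, hi, rfl⟩ := Finset.mem_image.mp he
    exact mem_edgeFinset.mpr (G.mem_edgeSet.mpr (hadj i hi))
  -- the coloring is TMC
  have hTMC : IsTMCColoring G ce cv := by
    intro u v huv
    by_cases hA : G.Adj u v
    · refine ⟨Walk.cons hA Walk.nil, by simp [hA.ne], ce s(u, v), ?_, ?_⟩
      · intro e he
        simp only [Walk.edges_cons, Walk.edges_nil, List.mem_singleton] at he
        rw [he]
      · intro x hx
        simp at hx
    · obtain ⟨hu, hv⟩ := hserve u v huv hA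
      have huz : u ≠ z := fun h => hzL (h ▸ hu)
      have hvz : v ≠ z := fun h => hzL (h ▸ hv)
      have h1 : G.Adj u z := (hadj u hu).symm
      have h2 : G.Adj z v := hadj v hv
      refine ⟨Walk.cons h1 (Walk.cons h2 Walk.nil), ?_, 0, ?_, ?_⟩
      · rw [Walk.isPath_def]
        simp [Walk.support_cons]
        tauto
      · intro e he
        simp only [Walk.edges_cons, Walk.edges_nil, List.mem_cons, List.not_mem_nil,
          or_false] at he
        rcases he with rfl | rfl
        · have hmem : s(u, z) ∈ starE := by
            rw [Sym2.eq_swap]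
            exact Finset.mem_image_of_mem _ hu
          simp [hce, hmem]
        · have hmem : s(z, v) ∈ starE := Finset.mem_image_of_mem _ hv
          simp [hce, hmem]
      · intro x hx
        have : x = z := by
          simpa using hx
        simp [hcv, this]
  -- count the colors
  have hcount : G.edgeFinset.card + Fintype.card V ≤ colorsUsed G ce cv + L.card := by
    rw [colorsUsed_eq]
    set A := (G.edgeFinset \ starE).image ce with hA
    have hsub : A ∪ (univ : Finset V).image cv ⊆ G.edgeFinset.image ce ∪ Finset.univ.image cv := by
      apply Finset.union_subset_union _ (le_refl _)
      exact Finset.image_subset_image (Finset.sdiff_subset)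
    have hAcard : A.card = (G.edgeFinset \ starE).card := by
      apply Finset.card_image_of_injOn
      intro e he e' he' hee
      have h1 : e ∉ starE := (Finset.mem_sdiff.mp he).2
      have h2 : e' ∉ starE := (Finset.mem_sdiff.mp he').2
      simp only [hce, if_neg h1, if_neg h2] at hee
      exact eenc.injective (Fin.ext (by omega))
    have hBcard : ((univ : Finset V).image cv).card = Fintype.card V := by
      rw [← Finset.card_univ]
      apply Finset.card_image_of_injOn
      intro x _ y _ hxy
      by_cases hx : x = z <;> by_cases hy : y = z
      · rw [hx, hy]
      · exfalso; simp only [hcv, if_pos hx, if_neg hy] at hxy; omega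
      · exfalso; simp only [hcv, if_neg hx, if_pos hy] at hxy; omega
      · simp only [hcv, if_neg hx, if_neg hy] at hxy
        exact venc.injective (Fin.ext (by omega))
    have hdisj : Disjoint A ((univ : Finset V).image cv) := by
      rw [Finset.disjoint_left]
      intro a haA haB
      obtain ⟨e, he, rfl⟩ := Finset.mem_image.mp haA
      obtain ⟨x, _, hx⟩ := Finset.mem_image.mp haB
      have h1 : e ∉ starE := (Finset.mem_sdiff.mp he).2
      have h2 : ((eenc e).val : ℕ) < M := by rw [hM]; exact (eenc e).isLt
      simp only [hce, if_neg h1] at hx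
      by_cases hxz : x = z
      · simp only [hcv, if_pos hxz] at hx; omega
      · simp only [hcv, if_neg hxz] at hx; omega
    have hcc : (A ∪ (univ : Finset V).image cv).card ≤ (G.edgeFinset.image ce ∪ Finset.univ.image cv).card :=
      Finset.card_le_card hsub
    rw [Finset.card_union_of_disjoint hdisj, hAcard, hBcard] at hcc
    have hsd : G.edgeFinset.card ≤ (G.edgeFinset \ starE).card + L.card := by
      have h1 := Finset.le_card_sdiff starE G.edgeFinset
      have h2 : starE.card ≤ L.card := Finset.card_image_le
      omega
    omega
  have := le_tmc G ce cv hTMC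
  omega


lemma mem_pairs {V : Type} [Fintype V] [DecidableEq V] (T : Finset V) (z : Sym2 V) :
    z ∈ T.offDiag.image Sym2.mk.uncurry ↔ ¬z.IsDiag ∧ ∀ x ∈ z, x ∈ T := by
  constructor
  · rintro hz
    obtain ⟨⟨a, b⟩, hab, rfl⟩ := Finset.mem_image.mp hz
    simp only [Finset.mem_offDiag] at hab
    refine ⟨by simp [Sym2.mk_isDiag_iff]; exact hab.2.2, fun x hx => ?_⟩
    rcases Sym2.mem_iff.mp hx with rfl | rfl
    · exact hab.1
    · exact hab.2.1
  · rintro ⟨hd, hmem⟩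
    refine Finset.mem_image.mpr ⟨z.out, ?_, z.out_eq⟩
    simp only [Finset.mem_offDiag]
    refine ⟨hmem _ (Sym2.out_fst_mem z), hmem _ (Sym2.out_snd_mem z), fun h => ?_⟩
    exact hd (by rw [← z.out_eq, Sym2.isDiag_iff_proj_eq]; exact h)

lemma na_card {V : Type} [Fintype V] [DecidableEq V] (G : SimpleGraph V) [DecidableRel G.Adj] :
    (((univ : Finset V).offDiag.image Sym2.mk.uncurry) \ G.edgeFinset).card + G.edgeFinset.card
      = (Fintype.card V).choose 2 := by
  have hsub : G.edgeFinset ⊆ (univ : Finset V).offDiag.image Sym2.mk.uncurry := by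
    intro e he
    rw [mem_pairs]
    exact ⟨G.not_isDiag_of_mem_edgeSet (mem_edgeFinset.mp he), fun x _ => mem_univ x⟩
  rw [Finset.card_sdiff_of_subset hsub]
  have hle := Finset.card_le_card hsub
  have : ((univ : Finset V).offDiag.image Sym2.mk.uncurry).card = (Fintype.card V).choose 2 := by
    rw [Sym2.card_image_offDiag, Finset.card_univ]
  omega

lemma fin_filter_lt_card (n t : ℕ) (h : t ≤ n) :
    ((univ : Finset (Fin n)).filter fun i => i.val < t).card = t := by
  have key : ((univ : Finset (Fin n)).filter fun i => i.val < t).card = (Finset.range t).card := by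
    apply Finset.card_bij (fun i _ => i.val)
    · intro a ha
      rw [Finset.mem_range]
      exact (Finset.mem_filter.mp ha).2
    · intro a _ b _ hab
      exact Fin.ext hab
    · intro b hb
      rw [Finset.mem_range] at hb
      exact ⟨⟨b, by omega⟩, Finset.mem_filter.mpr ⟨mem_univ _, hb⟩, rfl⟩
  rw [key, Finset.card_range]

lemma fin_filter_icc_card (n a b : ℕ) (h : b < n) :
    ((univ : Finset (Fin n)).filter fun i => a ≤ i.val ∧ i.val ≤ b).card = b + 1 - a := by
  have key : ((univ : Finset (Fin n)).filter fun i => a ≤ i.val ∧ i.val ≤ b).card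
      = (Finset.Icc a b).card := by
    apply Finset.card_bij (fun i _ => i.val)
    · intro x hx
      rw [Finset.mem_Icc]
      exact (Finset.mem_filter.mp hx).2
    · intro x _ y _ hxy
      exact Fin.ext hxy
    · intro x hx
      rw [Finset.mem_Icc] at hx
      exact ⟨⟨x, by omega⟩, Finset.mem_filter.mpr ⟨mem_univ _, hx⟩, rfl⟩
  rw [key, Nat.card_Icc]

/-! ### the split graph -/

def SplitG (n t s : ℕ) : SimpleGraph (Fin n) where
  Adj a b := a ≠ b ∧ (t ≤ a.val ∨ t ≤ b.val ∨ (a.val = 0 ∧ b.val ≤ s) ∨ (b.val = 0 ∧ a.val ≤ s))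
  symm := by
    refine ⟨fun a b h => ?_⟩
    obtain ⟨h1, h2⟩ := h
    exact ⟨h1.symm, by tauto⟩
  loopless := ⟨fun a h => h.1 rfl⟩

instance (n t s : ℕ) : DecidableRel (SplitG n t s).Adj := fun a b => by
  change Decidable (a ≠ b ∧ (t ≤ a.val ∨ t ≤ b.val ∨ (a.val = 0 ∧ b.val ≤ s) ∨ (b.val = 0 ∧ a.val ≤ s)))
  infer_instance

lemma splitG_adj {n t s : ℕ} {a b : Fin n} : (SplitG n t s).Adj a b ↔
    a ≠ b ∧ (t ≤ a.val ∨ t ≤ b.val ∨ (a.val = 0 ∧ b.val ≤ s) ∨ (b.val = 0 ∧ a.val ≤ s)) :=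
  Iff.rfl

lemma splitG_connected (n t s : ℕ) (htn : t < n) : (SplitG n t s).Connected := by
  have hne : Nonempty (Fin n) := ⟨⟨t, htn⟩⟩
  rw [connected_iff]
  refine ⟨?_, hne⟩
  intro a b
  set w : Fin n := ⟨t, htn⟩ with hw
  have hadj : ∀ x : Fin n, x ≠ w → (SplitG n t s).Adj x w := by
    intro x hx
    exact ⟨hx, Or.inr (Or.inl (le_refl t))⟩
  have h1 : (SplitG n t s).Reachable a w := by
    by_cases h : a = w
    · rw [h]
    · exact (hadj a h).reachable
  have h2 : (SplitG n t s).Reachable w b := by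
    by_cases h : b = w
    · rw [h]
    · exact ((hadj b h).symm).reachable
  exact h1.trans h2

lemma splitG_card (n t s : ℕ) (h2 : 2 ≤ t) (htn : t < n) (hs : s ≤ t - 1) :
    (SplitG n t s).edgeFinset.card + t.choose 2 = n.choose 2 + s := by
  classical
  set T := (univ : Finset (Fin n)).filter (fun i => i.val < t) with hT
  set J := (univ : Finset (Fin n)).filter (fun j => 1 ≤ j.val ∧ j.val ≤ s) with hJ
  set starS := J.image (fun j => s((⟨0, by omega⟩ : Fin n), j)) with hstarS
  have hTcard : T.card = t := fin_filter_lt_card n t (by omega)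
  have hJcard : J.card = s := by
    rw [hJ, fin_filter_icc_card n 1 s (by omega)]
    omega
  have hstarScard : starS.card = s := by
    rw [hstarS, ← hJcard]
    apply Finset.card_image_of_injOn
    intro i hi j hj hij
    have hi' : i ∈ J := hi
    have hj' : j ∈ J := hj
    rw [hJ, Finset.mem_filter] at hi' hj'
    simp only at hij
    rcases Sym2.eq_iff.mp hij with ⟨_, h⟩ | ⟨h, _⟩
    · exact h
    · exfalso
      have hj1 := hj'.2.1
      have : j.val = 0 := by rw [← h]
      omega
  have hstar_sub : starS ⊆ T.offDiag.image Sym2.mk.uncurry := by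
    intro z hz
    obtain ⟨j, hj, rfl⟩ := Finset.mem_image.mp hz
    rw [hJ, Finset.mem_filter] at hj
    rw [mem_pairs]
    constructor
    · rw [Sym2.mk_isDiag_iff]
      intro h
      have hj1 := hj.2.1
      have : j.val = 0 := by rw [← h]
      omega
    · intro x hx
      rw [hT, Finset.mem_filter]
      rcases Sym2.mem_iff.mp hx with rfl | rfl
      · refine ⟨mem_univ _, ?_⟩
        show (0 : ℕ) < t
        omega
      · refine ⟨mem_univ _, ?_⟩
        have h1 := hj.2.1
        have h2 := hj.2.2
        omega
  -- the nonadjacent pairs of SplitG are exactly T-pairs minus the star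
  have hNA : ((univ : Finset (Fin n)).offDiag.image Sym2.mk.uncurry) \ (SplitG n t s).edgeFinset
      = (T.offDiag.image Sym2.mk.uncurry) \ starS := by
    ext z
    rw [Finset.mem_sdiff, Finset.mem_sdiff, mem_pairs, mem_pairs]
    induction z using Sym2.ind with
    | _ a b =>
      simp only [Sym2.mk_isDiag_iff, mem_edgeFinset, mem_edgeSet, splitG_adj]
      constructor
      · rintro ⟨⟨hab, _⟩, hnadj⟩
        have hcond : ¬(t ≤ a.val ∨ t ≤ b.val ∨ (a.val = 0 ∧ b.val ≤ s) ∨ (b.val = 0 ∧ a.val ≤ s)) := by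
          intro h
          exact hnadj ⟨hab, h⟩
        push_neg at hcond
        obtain ⟨hta, htb, hstar1, hstar2⟩ := hcond
        refine ⟨⟨hab, ?_⟩, ?_⟩
        · intro x hx
          rw [hT, Finset.mem_filter]
          rcases Sym2.mem_iff.mp hx with rfl | rfl
          · exact ⟨mem_univ _, by omega⟩
          · exact ⟨mem_univ _, by omega⟩
        · intro hmem
          obtain ⟨j, hj, hjeq⟩ := Finset.mem_image.mp hmem
          rw [hJ, Finset.mem_filter] at hj
          rcases Sym2.eq_iff.mp hjeq with ⟨h1, h2⟩ | ⟨h1, h2⟩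
          · have ha0 : a.val = 0 := by rw [← h1]
            have hbs : b.val ≤ s := by rw [← h2]; exact hj.2.2
            have := hstar1 ha0
            omega
          · have hb0 : b.val = 0 := by rw [← h1]
            have has : a.val ≤ s := by rw [← h2]; exact hj.2.2
            have := hstar2 hb0
            omega
      · rintro ⟨⟨hab, hmem⟩, hnstar⟩
        have ha : a.val < t := by
          have := hmem a (by simp)
          rw [hT, Finset.mem_filter] at this
          exact this.2
        have hb : b.val < t := by
          have := hmem b (by simp)
          rw [hT, Finset.mem_filter] at this
          exact this.2
        refine ⟨⟨hab, fun x _ => mem_univ x⟩, ?_⟩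
        rintro ⟨_, h | h | ⟨h1, h2⟩ | ⟨h1, h2⟩⟩
        · omega
        · omega
        · -- a = 0, b ≤ s : this pair is in the star
          apply hnstar
          refine Finset.mem_image.mpr ⟨b, ?_, ?_⟩
          · rw [hJ, Finset.mem_filter]
            have hb0 : b.val ≠ 0 := by
              intro h0
              exact hab (Fin.ext (by omega))
            exact ⟨mem_univ _, by omega, h2⟩
          · apply Sym2.eq_iff.mpr
            left
            exact ⟨Fin.ext (by simp [h1.symm]), rfl⟩
        · apply hnstar
          refine Finset.mem_image.mpr ⟨a, ?_, ?_⟩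
          · rw [hJ, Finset.mem_filter]
            have ha0 : a.val ≠ 0 := by
              intro h0
              exact hab (Fin.ext (by omega))
            exact ⟨mem_univ _, by omega, h2⟩
          · apply Sym2.eq_iff.mpr
            right
            exact ⟨Fin.ext (by simp [h1.symm]), rfl⟩
  have hkey := na_card (SplitG n t s)
  rw [hNA, Finset.card_sdiff_of_subset hstar_sub] at hkey
  have hTp : (T.offDiag.image Sym2.mk.uncurry).card = t.choose 2 := by
    rw [Sym2.card_image_offDiag, hTcard]
  have hsle : s ≤ t.choose 2 := by
    have := Finset.card_le_card hstar_sub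
    rw [hstarScard, hTp] at this
    exact this
  rw [hTp, hstarScard, Fintype.card_fin] at hkey
  omega

lemma top_edge_card (n : ℕ) : (⊤ : SimpleGraph (Fin n)).edgeFinset.card = n.choose 2 := by
  classical
  have h := na_card (⊤ : SimpleGraph (Fin n))
  have hempty : ((univ : Finset (Fin n)).offDiag.image Sym2.mk.uncurry) \ (⊤ : SimpleGraph (Fin n)).edgeFinset = ∅ := by
    rw [Finset.sdiff_eq_empty_iff_subset]
    intro z hz
    rw [mem_pairs] at hz
    rw [mem_edgeFinset]
    induction z using Sym2.ind with
    | _ a b =>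
      rw [mem_edgeSet, top_adj]
      intro h
      exact hz.1 (by simp [Sym2.mk_isDiag_iff, h])
  rw [hempty, Fintype.card_fin] at h
  simpa using h
lemma ncard_edges {V : Type} [Fintype V] [DecidableEq V] (G : SimpleGraph V) [DecidableRel G.Adj] :
    G.edgeSet.ncard = G.edgeFinset.card := by
  rw [← coe_edgeFinset, Set.ncard_coe_finset]

/-! ### CON instantiations -/

lemma con_split1 (n t s : ℕ) (h2 : 2 ≤ t) (htn : t < n) :
    (SplitG n t s).edgeFinset.card + n ≤ tmc (SplitG n t s) + t := by
  have key := CON (SplitG n t s) ⟨t, htn⟩ ((univ : Finset (Fin n)).filter fun i => i.val < t)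
    ?_ ?_ ?_
  · rwa [fin_filter_lt_card n t htn.le, Fintype.card_fin] at key
  · rw [Finset.mem_filter]
    rintro ⟨-, h⟩
    simp at h
  · intro i hi
    rw [Finset.mem_filter] at hi
    refine ⟨?_, Or.inl (le_refl t)⟩
    intro h
    rw [← h] at hi
    simp at hi
  · intro u v hne hnadj
    rw [splitG_adj] at hnadj
    push_neg at hnadj
    have h := hnadj hne
    rw [Finset.mem_filter, Finset.mem_filter]
    exact ⟨⟨mem_univ _, by omega⟩, ⟨mem_univ _, by omega⟩⟩

lemma con_split2 (n t : ℕ) (h2 : 2 ≤ t) (htn : t < n) :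
    (SplitG n t (t-1)).edgeFinset.card + n ≤ tmc (SplitG n t (t-1)) + (t-1) := by
  have key := CON (SplitG n t (t-1)) ⟨0, by omega⟩
    ((univ : Finset (Fin n)).filter fun i => 1 ≤ i.val ∧ i.val ≤ t-1) ?_ ?_ ?_
  · rwa [fin_filter_icc_card n 1 (t-1) (by omega), Fintype.card_fin,
      show t - 1 + 1 - 1 = t - 1 by omega] at key
  · rw [Finset.mem_filter]
    rintro ⟨-, h, -⟩
    simp at h
  · intro i hi
    rw [Finset.mem_filter] at hi
    obtain ⟨-, h1, h2⟩ := hi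
    refine ⟨?_, Or.inr (Or.inr (Or.inl ⟨rfl, h2⟩))⟩
    intro h
    rw [← h] at h1
    simp at h1
  · intro u v hne hnadj
    rw [splitG_adj] at hnadj
    push_neg at hnadj
    obtain ⟨hta, htb, hs1, hs2⟩ := hnadj hne
    rw [Finset.mem_filter, Finset.mem_filter]
    have hu1 : 1 ≤ u.val := by
      rcases Nat.eq_zero_or_pos u.val with h0 | h0
      · exfalso
        have := hs1 h0
        omega
      · omega
    have hv1 : 1 ≤ v.val := by
      rcases Nat.eq_zero_or_pos v.val with h0 | h0
      · exfalso
        have := hs2 h0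
        omega
      · omega
    exact ⟨⟨mem_univ _, hu1, by omega⟩, ⟨mem_univ _, hv1, by omega⟩⟩

lemma con_top (n : ℕ) (h1 : 1 ≤ n) : n.choose 2 + n ≤ tmc (⊤ : SimpleGraph (Fin n)) := by
  classical
  have key := CON (⊤ : SimpleGraph (Fin n)) ⟨0, by omega⟩ ∅ (by simp) (by simp) ?_
  · rwa [top_edge_card, Fintype.card_fin, Finset.card_empty, add_zero] at key
  · intro u v hne hnadj
    exact absurd hne (by simpa using hnadj)

lemma top_conn (n : ℕ) (h1 : 1 ≤ n) : (⊤ : SimpleGraph (Fin n)).Connected := by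
  have : Nonempty (Fin n) := ⟨⟨0, by omega⟩⟩
  exact connected_top

/-! ### computing gfun -/


lemma ncard_edge_eq {V : Type} [Fintype V] (G : SimpleGraph V) [inst : Fintype G.edgeSet] :
    G.edgeSet.ncard = G.edgeFinset.card := by
  rw [← coe_edgeFinset, Set.ncard_coe_finset]

lemma tmc_ub2 {V : Type} [Fintype V] (G : SimpleGraph V) (t : ℕ)
    (h : (t - 1).choose 2 + G.edgeSet.ncard < (Fintype.card V).choose 2) :
    tmc G + t ≤ G.edgeSet.ncard + Fintype.card V := by
  classical
  rw [ncard_edge_eq G] at h ⊢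
  exact tmc_ub G t h

lemma tmc_le_triv2 {V : Type} [Fintype V] (G : SimpleGraph V) :
    tmc G ≤ G.edgeSet.ncard + Fintype.card V := by
  classical
  rw [ncard_edge_eq G]
  exact tmc_le_triv G

lemma edge_ncard_le {V : Type} [Fintype V] (G : SimpleGraph V) :
    G.edgeSet.ncard ≤ (Fintype.card V).choose 2 := by
  classical
  rw [ncard_edge_eq G]
  exact edgeFinset_card_le G

lemma splitG_ncard (n t s : ℕ) (h2 : 2 ≤ t) (htn : t < n) (hs : s ≤ t - 1) :
    (SplitG n t s).edgeSet.ncard + t.choose 2 = n.choose 2 + s := by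
  classical
  rw [ncard_edge_eq]
  exact splitG_card n t s h2 htn hs

lemma con_split1n (n t s : ℕ) (h2 : 2 ≤ t) (htn : t < n) :
    (SplitG n t s).edgeSet.ncard + n ≤ tmc (SplitG n t s) + t := by
  classical
  rw [ncard_edge_eq]
  exact con_split1 n t s h2 htn

lemma con_split2n (n t : ℕ) (h2 : 2 ≤ t) (htn : t < n) :
    (SplitG n t (t-1)).edgeSet.ncard + n ≤ tmc (SplitG n t (t-1)) + (t-1) := by
  classical
  rw [ncard_edge_eq]
  exact con_split2 n t h2 htn

lemma top_ncard (n : ℕ) : (⊤ : SimpleGraph (Fin n)).edgeSet.ncard = n.choose 2 := by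
  classical
  rw [ncard_edge_eq]
  exact top_edge_card n

lemma gfun_eq (n k g₀ : ℕ)
    (hmem : g₀ ≤ n.choose 2 ∧
      ∀ (V : Type) [Fintype V] (G : SimpleGraph V), G.Connected →
        Fintype.card V = n → G.edgeSet.ncard ≤ g₀ → tmc G ≤ k)
    (hub : ∀ g, (g ≤ n.choose 2 ∧
      ∀ (V : Type) [Fintype V] (G : SimpleGraph V), G.Connected →
        Fintype.card V = n → G.edgeSet.ncard ≤ g → tmc G ≤ k) → g ≤ g₀) :
    gfun n k = g₀ := by
  apply le_antisymm
  · exact nat_sSup_le (fun x hx => hub x hx)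
  · exact le_csSup ⟨n.choose 2, fun x hx => hx.1⟩ hmem

theorem stmt19 (n k : ℕ) (hk1 : n ≤ k) (hk2 : k ≤ n.choose 2 + n) :
    (∀ t : ℕ, 2 ≤ t → t ≤ n - 1 →
      (n - t).choose 2 + t * (n - t - 1) + n ≤ k →
      k ≤ (n - t).choose 2 + t * (n - t) + n - 2 →
      gfun n k = k - n + t) ∧
    (∀ t : ℕ, 2 ≤ t → t ≤ n - 1 →
      k = (n - t).choose 2 + t * (n - t) + n - 1 →
      gfun n k = k - n + t - 1) ∧
    (k = n.choose 2 + n - 1 → gfun n k = n.choose 2 - 1) ∧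
    (k = n.choose 2 + n → gfun n k = n.choose 2) := by
  refine ⟨?_, ?_, ?_, ?_⟩
  -- Branch 1
  · intro t ht2 htn hlo hhi
    have hn3 : 3 ≤ n := by omega
    set d := n - t with hd
    have hdt : t + d = n := by omega
    have hd1 : 1 ≤ d := by omega
    have hC : n.choose 2 = t.choose 2 + d.choose 2 + t*d := by
      rw [← hdt]; exact choose2_add t d
    have hCt : t.choose 2 = (t-1).choose 2 + (t-1) := by
      have h' := choose2_succ (t-1)
      rw [show t-1+1 = t by omega] at h'
      omega
    have hmul : t * (d-1) + t = t * d := by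
      have hh : d - 1 + 1 = d := by omega
      calc t * (d-1) + t = t * ((d-1)+1) := by ring
        _ = t * d := by rw [hh]
    apply gfun_eq
    · constructor
      · -- k - n + t ≤ n.choose 2
        omega
      · intro V _ G hconn hcard hedges
        have hub := tmc_ub2 G t (by rw [hcard]; omega)
        rw [hcard] at hub
        omega
    · intro g hg
      by_contra hcon
      push_neg at hcon
      set s' := k - n + t + 1 - (d.choose 2 + t*d) with hs'
      have hs'range : 1 ≤ s' ∧ s' ≤ t - 1 ∧ d.choose 2 + t*d + s' = k - n + t + 1 := by omega
      have hedges : (SplitG n t s').edgeSet.ncard ≤ g := by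
        have := splitG_ncard n t s' ht2 (by omega) (by omega)
        omega
      have htmc := hg.2 (Fin n) (SplitG n t s') (splitG_connected n t s' (by omega))
        (Fintype.card_fin n) hedges
      have hcon2 := con_split1n n t s' ht2 (by omega)
      have h3 := splitG_ncard n t s' ht2 (by omega) (by omega)
      omega
  -- Branch 2
  · intro t ht2 htn heq
    have hn3 : 3 ≤ n := by omega
    set d := n - t with hd
    have hdt : t + d = n := by omega
    have hC : n.choose 2 = t.choose 2 + d.choose 2 + t*d := by
      rw [← hdt]; exact choose2_add t d
    have hCt : t.choose 2 = (t-1).choose 2 + (t-1) := by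
      have h' := choose2_succ (t-1)
      rw [show t-1+1 = t by omega] at h'
      omega
    apply gfun_eq
    · constructor
      · omega
      · intro V _ G hconn hcard hedges
        have hub := tmc_ub2 G t (by rw [hcard]; omega)
        rw [hcard] at hub
        omega
    · intro g hg
      by_contra hcon
      push_neg at hcon
      have hedges : (SplitG n t (t-1)).edgeSet.ncard ≤ g := by
        have := splitG_ncard n t (t-1) ht2 (by omega) (le_refl _)
        omega
      have htmc := hg.2 (Fin n) (SplitG n t (t-1)) (splitG_connected n t (t-1) (by omega))
        (Fintype.card_fin n) hedges
      have hcon2 := con_split2n n t ht2 (by omega)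
      have h3 := splitG_ncard n t (t-1) ht2 (by omega) (le_refl _)
      omega
  -- Branch 3
  · intro heq
    rcases Nat.eq_zero_or_pos n with hn0 | hn1
    · subst hn0
      have h00 : (0:ℕ).choose 2 = 0 := rfl
      apply gfun_eq
      · refine ⟨by omega, ?_⟩
        intro V _ G hconn hcard _
        exfalso
        have : Nonempty V := hconn.nonempty
        have := Fintype.card_pos (α := V)
        omega
      · intro g hg
        have := hg.1
        omega
    · have hn2 : 2 ≤ n := by
        by_contra hc
        push_neg at hc
        have hn1' : n = 1 := by omega
        rw [hn1'] at heq
        simp at heq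
        omega
      have hCpos : 1 ≤ n.choose 2 := Nat.choose_pos hn2
      apply gfun_eq
      · refine ⟨by omega, ?_⟩
        intro V _ G hconn hcard hedges
        have hub := tmc_ub2 G 2 (by rw [hcard]; norm_num; omega)
        rw [hcard] at hub
        omega
      · intro g hg
        by_contra hcon
        push_neg at hcon
        have hgle := hg.1
        have hedges : (⊤ : SimpleGraph (Fin n)).edgeSet.ncard ≤ g := by
          rw [top_ncard]
          omega
        have htmc := hg.2 (Fin n) ⊤ (top_conn n (by omega)) (Fintype.card_fin n) hedges
        have := con_top n (by omega)
        omega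
  -- Branch 4
  · intro heq
    apply gfun_eq
    · refine ⟨le_refl _, ?_⟩
      intro V _ G hconn hcard hedges
      have h1 := tmc_le_triv2 G
      rw [hcard] at h1
      omega
    · intro g hg
      exact hg.1

end TMCProof
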